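/- For subsets R, C ⊆ V, the rank of the submatrix of the generic response matrix 𝕋 with rows indexed by C and columns indexed by R equals b(R→C), the maximum number of pairwise vertex-disjoint directed paths from R to C in (V,E). -/

import Mathlib

open Matrix

/-- A directed path in the graph with edge set `E`: a nonempty list of pairwise distinct
vertices in which every pair of consecutive vertices is an edge. A single vertex is a
path of length `0`. -/
def IsDiPath {V : Type*} (E : Finset (V × V)) (l : List V) : Prop :=
  l ≠ [] ∧ l.Nodup ∧ l.Chain' (fun a b => (a, b) ∈ E)

/-- A directed path starting at a vertex of `R` and ending at a vertex of `C`. -/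
def IsDiPathFromTo {V : Type*} (E : Finset (V × V)) (R C : Finset V) (l : List V) : Prop :=
  IsDiPath E l ∧ (∃ r ∈ R, l.head? = some r) ∧ (∃ c ∈ C, l.getLast? = some c)

/-- There exist `n` pairwise vertex-disjoint directed paths from `R` to `C`. -/
def HasDisjointPaths {V : Type*} (E : Finset (V × V)) (R C : Finset V) (n : ℕ) : Prop :=
  ∃ f : Fin n → List V, (∀ k, IsDiPathFromTo E R C (f k)) ∧
    ∀ k l : Fin n, k ≠ l → ∀ v : V, v ∈ f k → v ∉ f l

/-- `b(R→C)`: the maximum number of pairwise vertex-disjoint directed paths from `R`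
to `C`. -/
noncomputable def maxDisjointPaths {V : Type*} (E : Finset (V × V)) (R C : Finset V) : ℕ :=
  sSup {n : ℕ | HasDisjointPaths E R C n}

/-- The generic network matrix `𝔾` over the fraction field of `ℝ[Xₑ : e ∈ E]`:
`𝔾 j i = X (i,j)` if `(i,j) ∈ E`, and `0` otherwise. -/
noncomputable def genG {V : Type*} [Fintype V] [DecidableEq V] (E : Finset (V × V)) :
    Matrix V V (FractionRing (MvPolynomial {e : V × V // e ∈ E} ℝ)) :=
  Matrix.of fun j i =>
    if h : (i, j) ∈ E then
      algebraMap (MvPolynomial {e : V × V // e ∈ E} ℝ) _ (MvPolynomial.X ⟨(i, j), h⟩)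
    else 0

/-- The generic response matrix `𝕋 = (I - 𝔾)⁻¹`. -/
noncomputable def genT {V : Type*} [Fintype V] [DecidableEq V] (E : Finset (V × V)) :
    Matrix V V (FractionRing (MvPolynomial {e : V × V // e ∈ E} ℝ)) :=
  (1 - genG E)⁻¹

/-! ### Auxiliary lemmas -/

section Aux

/-- Jacobi-type identity in block form :
`det (M⁻¹)₁₁ * det M = det M₂₂` for invertible `M`. -/
theorem aux_jacobi {F : Type*} [Field F] {n m : ℕ}
    (M : Matrix (Fin n ⊕ Fin m) (Fin n ⊕ Fin m) F) (hM : IsUnit M.det) :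
    (M⁻¹.toBlocks₁₁).det * M.det = (M.toBlocks₂₂).det := by
  set P := M.toBlocks₁₁ with hP
  set Q := M.toBlocks₁₂ with hQ
  set S := M.toBlocks₂₁ with hS
  set T := M.toBlocks₂₂ with hT
  set X := M⁻¹.toBlocks₁₁ with hX
  set X' := M⁻¹.toBlocks₁₂ with hX'
  set Y := M⁻¹.toBlocks₂₁ with hY
  set Y' := M⁻¹.toBlocks₂₂ with hY'
  have hM' : M = fromBlocks P Q S T := (fromBlocks_toBlocks M).symm
  have hMi : M⁻¹ = fromBlocks X X' Y Y' := (fromBlocks_toBlocks M⁻¹).symm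
  have hMinv : fromBlocks P Q S T * fromBlocks X X' Y Y' = 1 := by
    rw [← hM', ← hMi]; exact mul_nonsing_inv M hM
  rw [fromBlocks_multiply] at hMinv
  have h11 : P * X + Q * Y = 1 := by
    have := congrArg Matrix.toBlocks₁₁ hMinv
    rw [← fromBlocks_one, Matrix.toBlocks_fromBlocks₁₁, Matrix.toBlocks_fromBlocks₁₁] at this; exact this
  have h21 : S * X + T * Y = 0 := by
    have := congrArg Matrix.toBlocks₂₁ hMinv
    rw [← fromBlocks_one, Matrix.toBlocks_fromBlocks₂₁, Matrix.toBlocks_fromBlocks₂₁] at this; exact this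
  have key : M * fromBlocks X 0 Y 1 = fromBlocks 1 Q 0 T := by
    rw [hM', fromBlocks_multiply]
    simp [h11, h21]
  have hdet := congrArg Matrix.det key
  rw [det_mul, det_fromBlocks_zero₁₂, det_fromBlocks_zero₂₁, det_one, det_one,
    mul_one, one_mul] at hdet
  rw [mul_comm]
  exact hdet

lemma aux_prod_neg_X {ι' α : Type*} [DecidableEq ι'] (s : Finset α)
    (f : α → MvPolynomial ι' ℝ) (g : α → (ι' →₀ ℕ))
    (hfg : ∀ a ∈ s, ∃ j, f a = MvPolynomial.X j ∧ g a = Finsupp.single j 1) :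
    ∏ a ∈ s, (0 - f a) = MvPolynomial.monomial (∑ a ∈ s, g a) ((-1) ^ s.card) := by
  classical
  induction s using Finset.induction_on with
  | empty => simp
  | insert a s ha ih =>
    obtain ⟨j, hfa, hga⟩ := hfg a (Finset.mem_insert_self a s)
    rw [Finset.prod_insert ha, Finset.sum_insert ha,
      ih (fun b hb => hfg b (Finset.mem_insert_of_mem hb)), hfa, hga,
      Finset.card_insert_of_notMem ha]
    have hX : (MvPolynomial.X j : MvPolynomial ι' ℝ) =
        MvPolynomial.monomial (Finsupp.single j 1) 1 := by
      rw [← pow_one (MvPolynomial.X j), MvPolynomial.X_pow_eq_monomial]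
    rw [zero_sub, hX, neg_mul, MvPolynomial.monomial_mul, ← map_neg]
    congr 1
    ring


section Graph

variable {V : Type*} [Fintype V] [DecidableEq V] (E : Finset (V × V))

/-- A "routing" : a permutation matching column vertices `w i` to row vertices
`u (τ i)` where each non-fixed pair is an edge. -/
def IsRouting {m : ℕ} (u w : Fin m → V) (τ : Equiv.Perm (Fin m)) : Prop :=
  ∀ i, u (τ i) = w i ∨ (w i, u (τ i)) ∈ E

/-- The key combinatorial fact : a minor of the generic matrix `1 - 𝔾` is nonzero
iff a routing exists. -/
theorem aux_det_ne_zero_iff (hloop : ∀ i : V, (i, i) ∉ E) {m : ℕ}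
    (u w : Fin m → V) (hu : Function.Injective u) (hw : Function.Injective w) :
    ((1 - genG E).submatrix u w).det ≠ 0 ↔ ∃ τ, IsRouting E u w τ := by
  classical
  set Rp := MvPolynomial {e : V × V // e ∈ E} ℝ with hRp
  set φ := algebraMap Rp (FractionRing Rp) with hφ
  set Ap : Matrix V V Rp := Matrix.of (fun j i =>
    (if j = i then 1 else 0) -
      (if h : (i, j) ∈ E then MvPolynomial.X ⟨(i, j), h⟩ else 0)) with hAp
  have hmap : (1 - genG E).submatrix u w = (Ap.submatrix u w).map φ := by
    ext j i
    simp only [submatrix_apply, map_apply, Matrix.sub_apply, one_apply, genG, of_apply, hAp]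
    split_ifs <;> simp [hφ] <;> rfl
  have hdet : ((1 - genG E).submatrix u w).det = φ (Ap.submatrix u w).det := by
    rw [hmap, ← RingHom.mapMatrix_apply, ← RingHom.map_det]
  have hinj : Function.Injective φ := IsFractionRing.injective Rp (FractionRing Rp)
  rw [hdet]
  rw [ne_eq, ← map_zero φ, hinj.eq_iff, ← ne_eq]
  -- now a statement about polynomials
  set ndg : Equiv.Perm (Fin m) → Finset (Fin m) :=
    fun τ => Finset.univ.filter (fun i => u (τ i) ≠ w i) with hndg
  set D : Equiv.Perm (Fin m) → ({e : V × V // e ∈ E} →₀ ℕ) := fun τ =>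
    ∑ i ∈ ndg τ, (if h : (w i, u (τ i)) ∈ E then
      Finsupp.single (⟨(w i, u (τ i)), h⟩ : {e : V × V // e ∈ E}) 1 else 0) with hD
  have hentry_diag : ∀ (j i : V), j = i → Ap j i = 1 := by
    intro j i hji
    subst hji
    simp [hAp, hloop j]
  have hentry_off : ∀ (j i : V), j ≠ i →
      Ap j i = 0 - (if h : (i, j) ∈ E then MvPolynomial.X ⟨(i, j), h⟩ else 0) := by
    intro j i hji
    simp [hAp, hji]
  have hprod : ∀ τ : Equiv.Perm (Fin m), IsRouting E u w τ →
      ∏ i, Ap (u (τ i)) (w i) = MvPolynomial.monomial (D τ) ((-1) ^ (ndg τ).card) := by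
    intro τ hτ
    rw [← Finset.prod_filter_mul_prod_filter_not Finset.univ (fun i => u (τ i) ≠ w i)]
    have h2 : ∏ i ∈ Finset.univ.filter (fun i => ¬u (τ i) ≠ w i), Ap (u (τ i)) (w i) = 1 := by
      apply Finset.prod_eq_one
      intro i hi
      rw [Finset.mem_filter] at hi
      exact hentry_diag _ _ (not_not.mp hi.2)
    rw [h2, mul_one]
    have h1 : ∏ i ∈ ndg τ, Ap (u (τ i)) (w i) =
        ∏ i ∈ ndg τ, (0 - (if h : (w i, u (τ i)) ∈ E then
          (MvPolynomial.X ⟨(w i, u (τ i)), h⟩ : Rp) else 0)) := by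
      apply Finset.prod_congr rfl
      intro i hi
      rw [hndg, Finset.mem_filter] at hi
      exact hentry_off _ _ hi.2
    have hfg : ∀ i ∈ ndg τ, ∃ j, (if h : (w i, u (τ i)) ∈ E then
          (MvPolynomial.X ⟨(w i, u (τ i)), h⟩ : Rp) else 0) = MvPolynomial.X j ∧
        (if h : (w i, u (τ i)) ∈ E then
          Finsupp.single (⟨(w i, u (τ i)), h⟩ : {e : V × V // e ∈ E}) 1 else 0) =
          Finsupp.single j 1 := by
      intro i hi
      rw [hndg, Finset.mem_filter] at hi
      have hedge : (w i, u (τ i)) ∈ E := (hτ i).resolve_left hi.2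
      exact ⟨⟨(w i, u (τ i)), hedge⟩, by rw [dif_pos hedge], by rw [dif_pos hedge]⟩
    rw [show Finset.univ.filter (fun i => u (τ i) ≠ w i) = ndg τ from rfl, h1,
      aux_prod_neg_X (ndg τ) _ _ hfg]
  have hDne : ∀ τ : Equiv.Perm (Fin m), ∀ E₀ : {e : V × V // e ∈ E}, (D τ) E₀ ≠ 0 →
      ∃ i, i ∈ ndg τ ∧ w i = E₀.1.1 ∧ u (τ i) = E₀.1.2 := by
    intro τ E₀ hne
    rw [hD, Finsupp.finset_sum_apply] at hne
    obtain ⟨i, hi, hne2⟩ := Finset.exists_ne_zero_of_sum_ne_zero hne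
    refine ⟨i, hi, ?_⟩
    by_cases h : (w i, u (τ i)) ∈ E
    · rw [dif_pos h, Finsupp.single_apply] at hne2
      split_ifs at hne2 with heq
      · rw [← heq]
        exact ⟨rfl, rfl⟩
      · simp at hne2
    · rw [dif_neg h] at hne2
      simp at hne2
  have hDpos : ∀ τ : Equiv.Perm (Fin m), ∀ i ∈ ndg τ, ∀ h : (w i, u (τ i)) ∈ E,
      (D τ) ⟨(w i, u (τ i)), h⟩ ≠ 0 := by
    intro τ i hi h h0
    rw [hD, Finsupp.finset_sum_apply] at h0
    have := (Finset.sum_eq_zero_iff.mp h0) i hi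
    rw [dif_pos h, Finsupp.single_apply, if_pos rfl] at this
    exact one_ne_zero this
  have hDinj : ∀ τ τ₀ : Equiv.Perm (Fin m), IsRouting E u w τ → IsRouting E u w τ₀ →
      D τ = D τ₀ → τ = τ₀ := by
    intro τ τ₀ hτ hτ₀ hDeq
    apply Equiv.ext
    intro i
    by_cases hi : u (τ i) = w i
    · by_cases hi0 : u (τ₀ i) = w i
      · exact hu (hi.trans hi0.symm)
      · exfalso
        have hmem0 : i ∈ ndg τ₀ := by simp [hndg, hi0]
        have hedge0 : (w i, u (τ₀ i)) ∈ E := (hτ₀ i).resolve_left hi0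
        have h1 := hDpos τ₀ i hmem0 hedge0
        rw [← hDeq] at h1
        obtain ⟨i', hi', hww, _⟩ := hDne τ _ h1
        have : i' = i := hw hww
        subst this
        rw [hndg, Finset.mem_filter] at hi'
        exact hi'.2 hi
    · have hmem : i ∈ ndg τ := by simp [hndg, hi]
      have hedge : (w i, u (τ i)) ∈ E := (hτ i).resolve_left hi
      have h1 := hDpos τ i hmem hedge
      rw [hDeq] at h1
      obtain ⟨i', hi', hww, huu⟩ := hDne τ₀ _ h1
      have : i' = i := hw hww
      subst this
      exact hu (show u (τ i') = u (τ₀ i') from huu.symm)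
  rw [det_apply']
  constructor
  · intro hne
    by_contra hno
    push_neg at hno
    apply hne
    apply Finset.sum_eq_zero
    intro τ _
    have : ∃ i, u (τ i) ≠ w i ∧ (w i, u (τ i)) ∉ E := by
      by_contra hh
      push_neg at hh
      exact hno τ (fun i => by
        by_cases h : u (τ i) = w i
        · exact Or.inl h
        · exact Or.inr (hh i h))
    obtain ⟨i, hne', hnedge⟩ := this
    have hzero : (Ap.submatrix u w) (τ i) i = 0 := by
      rw [submatrix_apply, hentry_off _ _ hne', dif_neg hnedge, sub_zero]
    have hpz : ∏ j, (Ap.submatrix u w) (τ j) j = 0 :=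
      Finset.prod_eq_zero (Finset.mem_univ i) hzero
    rw [hpz, mul_zero]
  · rintro ⟨τ₀, hτ₀⟩ h0
    have hco := congrArg (MvPolynomial.coeff (D τ₀)) h0
    rw [MvPolynomial.coeff_sum, MvPolynomial.coeff_zero] at hco
    rw [Finset.sum_eq_single τ₀ ?_ ?_] at hco
    · have hpr : ∏ i, (Ap.submatrix u w) (τ₀ i) i = ∏ i, Ap (u (τ₀ i)) (w i) := rfl
      rw [hpr, hprod τ₀ hτ₀] at hco
      rw [show ((Equiv.Perm.sign τ₀ : ℤ) : Rp) = MvPolynomial.C ((Equiv.Perm.sign τ₀ : ℤ) : ℝ)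
          from by rw [map_intCast], MvPolynomial.coeff_C_mul, MvPolynomial.coeff_monomial,
        if_pos rfl] at hco
      rcases Int.units_eq_one_or (Equiv.Perm.sign τ₀) with hs | hs <;>
        rw [hs] at hco <;> simp at hco <;>
        exact absurd hco (by positivity <|> simp [pow_ne_zero])
    · intro τ _ hne
      by_cases hrt : IsRouting E u w τ
      · have hpr : ∏ i, (Ap.submatrix u w) (τ i) i = ∏ i, Ap (u (τ i)) (w i) := rfl
        rw [hpr, hprod τ hrt,
          show ((Equiv.Perm.sign τ : ℤ) : Rp) = MvPolynomial.C ((Equiv.Perm.sign τ : ℤ) : ℝ)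
            from by rw [map_intCast], MvPolynomial.coeff_C_mul, MvPolynomial.coeff_monomial,
          if_neg (fun hDeq => hne (hDinj τ τ₀ hrt hτ₀ hDeq)), mul_zero]
      · have : ∃ i, u (τ i) ≠ w i ∧ (w i, u (τ i)) ∉ E := by
          by_contra hh
          push_neg at hh
          exact hrt (fun i => by
            by_cases h : u (τ i) = w i
            · exact Or.inl h
            · exact Or.inr (hh i h))
        obtain ⟨i, hne', hnedge⟩ := this
        have hzero : (Ap.submatrix u w) (τ i) i = 0 := by
          rw [submatrix_apply, hentry_off _ _ hne', dif_neg hnedge, sub_zero]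
        have hpz : ∏ j, (Ap.submatrix u w) (τ j) j = 0 :=
          Finset.prod_eq_zero (Finset.mem_univ i) hzero
        rw [hpz, mul_zero, MvPolynomial.coeff_zero]
    · intro h
      exact absurd (Finset.mem_univ τ₀) h

theorem aux_detA_ne_zero (hloop : ∀ i : V, (i, i) ∉ E) : (1 - genG E).det ≠ 0 := by
  have h := (aux_det_ne_zero_iff E hloop (m := Fintype.card V)
    (Fintype.equivFin V).symm (Fintype.equivFin V).symm
    (Equiv.injective _) (Equiv.injective _)).2 ⟨1, fun i => Or.inl rfl⟩
  rwa [det_submatrix_equiv_self] at h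

/-- Jacobi glue : the `(c, r)` minor of `𝕋` is nonzero iff the complementary
minor of `1 - 𝔾` is nonzero. -/
theorem aux_glue (hloop : ∀ i : V, (i, i) ∉ E) {n : ℕ} (r c : Fin n → V)
    (hr : Function.Injective r) (hc : Function.Injective c) :
    ∃ (u w : Fin (Fintype.card V - n) → V), Function.Injective u ∧ Function.Injective w ∧
      Set.range u = (Set.range r)ᶜ ∧ Set.range w = (Set.range c)ᶜ ∧
      ((Matrix.of fun k l : Fin n => genT E (c k) (r l)).det ≠ 0 ↔
        ((1 - genG E).submatrix u w).det ≠ 0) := by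
  classical
  set A := 1 - genG E with hA
  have hdA : A.det ≠ 0 := aux_detA_ne_zero E hloop
  have hcardr : Fintype.card ↥(Set.range r)ᶜ = Fintype.card V - n := by
    rw [Fintype.card_compl_set, Set.card_range_of_injective hr, Fintype.card_fin]
  have hcardc : Fintype.card ↥(Set.range c)ᶜ = Fintype.card V - n := by
    rw [Fintype.card_compl_set, Set.card_range_of_injective hc, Fintype.card_fin]
  let er : Fin (Fintype.card V - n) ≃ ↥((Set.range r)ᶜ) := (Fintype.equivFinOfCardEq hcardr).symm
  let ec : Fin (Fintype.card V - n) ≃ ↥((Set.range c)ᶜ) := (Fintype.equivFinOfCardEq hcardc).symm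
  let ρ : Fin n ⊕ Fin (Fintype.card V - n) ≃ V :=
    (Equiv.sumCongr (Equiv.ofInjective r hr) er).trans (Equiv.Set.sumCompl (Set.range r))
  let γ : Fin n ⊕ Fin (Fintype.card V - n) ≃ V :=
    (Equiv.sumCongr (Equiv.ofInjective c hc) ec).trans (Equiv.Set.sumCompl (Set.range c))
  have hρl : ∀ k, ρ (Sum.inl k) = r k := fun k => by
    simp [ρ, Equiv.Set.sumCompl_apply_inl, Equiv.ofInjective]
  have hγl : ∀ k, γ (Sum.inl k) = c k := fun k => by
    simp [γ, Equiv.Set.sumCompl_apply_inl, Equiv.ofInjective]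
  refine ⟨fun j => ρ (Sum.inr j), fun j => γ (Sum.inr j), ?_, ?_, ?_, ?_, ?_⟩
  · exact fun a b hab => Sum.inr_injective (ρ.injective hab)
  · exact fun a b hab => Sum.inr_injective (γ.injective hab)
  · ext v
    constructor
    · rintro ⟨j, rfl⟩
      simp only [ρ, Equiv.trans_apply, Equiv.sumCongr_apply, Sum.map_inr]
      exact (er j).2
    · intro hv
      refine ⟨er.symm ⟨v, hv⟩, ?_⟩
      simp [ρ, Equiv.Set.sumCompl_apply_inr]
  · ext v
    constructor
    · rintro ⟨j, rfl⟩
      simp only [γ, Equiv.trans_apply, Equiv.sumCongr_apply, Sum.map_inr]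
      exact (ec j).2
    · intro hv
      refine ⟨ec.symm ⟨v, hv⟩, ?_⟩
      simp [γ, Equiv.Set.sumCompl_apply_inr]
  · set M := A.submatrix ρ γ with hM
    have hMunit : IsUnit M.det := by
      rw [← isUnit_iff_isUnit_det, hM, isUnit_submatrix_equiv, isUnit_iff_isUnit_det]
      exact isUnit_iff_ne_zero.2 hdA
    have hMd : M.det ≠ 0 := hMunit.ne_zero
    have hB11 : M⁻¹.toBlocks₁₁ = Matrix.of fun k l : Fin n => genT E (c k) (r l) := by
      rw [hM, inv_submatrix_equiv]
      ext k l
      simp only [toBlocks₁₁, submatrix_apply, of_apply]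
      rw [hγl, hρl]
      rfl
    have hB22 : M.toBlocks₂₂ = A.submatrix (fun j => ρ (Sum.inr j)) (fun j => γ (Sum.inr j)) := by
      ext j i
      simp [M, toBlocks₂₂]
    have hj := aux_jacobi M hMunit
    rw [hB11, hB22] at hj
    constructor
    · intro h
      rw [← hj]
      exact mul_ne_zero h hMd
    · intro h
      intro h0
      rw [← hj, h0, zero_mul] at h
      exact h rfl

theorem aux_paths_of_routing {n m : ℕ} (R C : Finset V) (r c : Fin n → V)
    (hr : Function.Injective r) (hrR : ∀ k, r k ∈ R) (hcC : ∀ k, c k ∈ C)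
    (u w : Fin m → V) (hu : Function.Injective u) (hw : Function.Injective w)
    (hru : Set.range u = (Set.range r)ᶜ) (hwc : Set.range w = (Set.range c)ᶜ)
    (τ : Equiv.Perm (Fin m)) (hτ : IsRouting E u w τ) :
    HasDisjointPaths E R C n := by
  classical
  set gs : V → V := fun v => if h : ∃ i, w i = v then u (τ h.choose) else v with hgs
  have hg1 : ∀ i : Fin m, gs (w i) = u (τ i) := by
    intro i
    have h : ∃ i', w i' = w i := ⟨i, rfl⟩
    rw [hgs]
    simp only [dif_pos h]
    rw [hw h.choose_spec]
  have hdom : ∀ v, v ∉ Set.range c → ∃ i, w i = v := by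
    intro v hv
    have : v ∈ Set.range w := by rw [hwc]; exact hv
    exact this
  have hgS : ∀ v, v ∉ Set.range c → (gs v = v ∨ (v, gs v) ∈ E) ∧ gs v ∉ Set.range r := by
    intro v hv
    obtain ⟨i, rfl⟩ := hdom v hv
    rw [hg1 i]
    refine ⟨hτ i, ?_⟩
    have : u (τ i) ∈ Set.range u := ⟨τ i, rfl⟩
    rw [hru] at this
    exact this
  have hinjS : ∀ v v', v ∉ Set.range c → v' ∉ Set.range c → gs v = gs v' → v = v' := by
    intro v v' hv hv' heq
    obtain ⟨i, rfl⟩ := hdom v hv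
    obtain ⟨i', rfl⟩ := hdom v' hv'
    rw [hg1 i, hg1 i'] at heq
    rw [τ.injective (hu heq)]
  set t : Fin n → ℕ → V := fun k a => gs^[a] (r k) with ht
  have hsucc : ∀ k a, t k (a + 1) = gs (t k a) := by
    intro k a
    rw [ht]
    exact Function.iterate_succ_apply' gs a (r k)
  have keq : ∀ (a : ℕ) (k k' : Fin n) (b : ℕ), (∀ x < a, t k x ∉ Set.range c) →
      (∀ x < b, t k' x ∉ Set.range c) → t k a = t k' b → k = k' ∧ a = b := by
    intro a
    induction a with
    | zero =>
      intro k k' b _ hb heq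
      cases b with
      | zero => exact ⟨hr heq, rfl⟩
      | succ b' =>
        exfalso
        have h1 : t k' b' ∉ Set.range c := hb b' (Nat.lt_succ_self b')
        have h2 := (hgS _ h1).2
        rw [← hsucc k' b', ← heq] at h2
        exact h2 ⟨k, rfl⟩
    | succ a' ih =>
      intro k k' b ha hb heq
      cases b with
      | zero =>
        exfalso
        have h1 : t k a' ∉ Set.range c := ha a' (Nat.lt_succ_self a')
        have h2 := (hgS _ h1).2
        rw [← hsucc k a', heq] at h2
        exact h2 ⟨k', rfl⟩
      | succ b' =>
        rw [hsucc k a', hsucc k' b'] at heq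
        have h1 : t k a' ∉ Set.range c := ha a' (Nat.lt_succ_self a')
        have h2 : t k' b' ∉ Set.range c := hb b' (Nat.lt_succ_self b')
        have h3 := hinjS _ _ h1 h2 heq
        obtain ⟨hk, hab⟩ := ih k k' b' (fun x hx => ha x (hx.trans (Nat.lt_succ_self a')))
          (fun x hx => hb x (hx.trans (Nat.lt_succ_self b'))) h3
        exact ⟨hk, by rw [hab]⟩
  have hhit : ∀ k, ∃ j, t k j ∈ Set.range c := by
    intro k
    by_contra hno
    push_neg at hno
    have hinj : Function.Injective (fun a : Fin (Fintype.card V + 1) => t k a) := by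
      intro a b hab
      have := keq a k k b (fun x _ => hno x) (fun x _ => hno x) hab
      exact Fin.ext this.2
    have := Fintype.card_le_of_injective _ hinj
    simp at this
  set J : Fin n → ℕ := fun k => Nat.find (hhit k) with hJ
  have hJspec : ∀ k, t k (J k) ∈ Set.range c := fun k => Nat.find_spec (hhit k)
  have hJmin : ∀ k, ∀ x < J k, t k x ∉ Set.range c := fun k x hx => Nat.find_min (hhit k) hx
  set L : Fin n → List V := fun k => (List.range (J k + 1)).map (t k) with hL
  have hmemL : ∀ k v, v ∈ L k ↔ ∃ a, a ≤ J k ∧ t k a = v := by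
    intro k v
    rw [hL]
    simp only [List.mem_map, List.mem_range, Nat.lt_succ_iff]
  refine ⟨L, fun k => ⟨⟨?_, ?_, ?_⟩, ?_, ?_⟩, ?_⟩
  · simp [hL]
  · apply List.Nodup.map_on ?_ List.nodup_range
    intro x hx y hy hxy
    rw [List.mem_range, Nat.lt_succ_iff] at hx hy
    exact (keq x k k y (fun z hz => hJmin k z (lt_of_lt_of_le hz hx))
      (fun z hz => hJmin k z (lt_of_lt_of_le hz hy)) hxy).2
  · rw [hL]
    unfold List.Chain'
    rw [List.isChain_map, List.isChain_range_succ]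
    intro a ha
    have h1 : t k a ∉ Set.range c := hJmin k a ha
    rcases (hgS _ h1).1 with hfix | hedge
    · exfalso
      have heq : t k (a + 1) = t k a := by rw [hsucc]; exact hfix
      have := (keq (a+1) k k a (fun z hz => hJmin k z (lt_of_le_of_lt (Nat.lt_succ_iff.mp hz) ha))
        (fun z hz => hJmin k z (hz.trans ha)) heq).2
      omega
    · rw [← hsucc k a] at hedge
      exact hedge
  · refine ⟨r k, hrR k, ?_⟩
    show ((List.range (J k + 1)).map (t k)).head? = some (r k)
    rw [List.range_succ_eq_map, List.map_cons, List.head?_cons]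
    rfl
  · obtain ⟨k', hk'⟩ := hJspec k
    refine ⟨c k', hcC k', ?_⟩
    show ((List.range (J k + 1)).map (t k)).getLast? = some (c k')
    rw [List.range_succ, List.map_append, List.map_cons, List.map_nil,
      List.getLast?_concat, hk']
  · intro k k' hkk' v hvk hvk'
    rw [hmemL] at hvk hvk'
    obtain ⟨a, ha, rfl⟩ := hvk
    obtain ⟨b, hb, hab⟩ := hvk'
    exact hkk' ((keq a k k' b (fun z hz => hJmin k z (lt_of_lt_of_le hz ha))
      (fun z hz => hJmin k' z (lt_of_lt_of_le hz hb)) hab.symm).1)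

/-- From disjoint paths, construct a routing. -/
theorem aux_routing_of_paths {n : ℕ} (R C : Finset V) (h : HasDisjointPaths E R C n) :
    ∃ r c : Fin n → V, Function.Injective r ∧ Function.Injective c ∧
      (∀ k, r k ∈ R) ∧ (∀ k, c k ∈ C) ∧
      ∀ (m : ℕ) (u w : Fin m → V), Function.Injective u → Function.Injective w →
        Set.range u = (Set.range r)ᶜ → Set.range w = (Set.range c)ᶜ →
        ∃ τ, IsRouting E u w τ := by
  classical
  obtain ⟨f, hf, hdisj⟩ := h
  have hne : ∀ k, f k ≠ [] := fun k => (hf k).1.1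
  have hnd : ∀ k, (f k).Nodup := fun k => (hf k).1.2.1
  set r : Fin n → V := fun k => (f k).head (hne k) with hrdef
  set c : Fin n → V := fun k => (f k).getLast (hne k) with hcdef
  have hrmem : ∀ k, r k ∈ f k := fun k => List.head_mem _
  have hcmem : ∀ k, c k ∈ f k := fun k => List.getLast_mem _
  have uniq : ∀ (k k' : Fin n) (v : V), v ∈ f k → v ∈ f k' → k = k' := by
    intro k k' v hk hk'
    by_contra hne'
    exact hdisj k k' hne' v hk hk'
  have hrR : ∀ k, r k ∈ R := by
    intro k
    obtain ⟨r0, hr0R, hr0⟩ := (hf k).2.1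
    rw [List.head?_eq_head (hne k)] at hr0
    have : r0 = r k := by injection hr0 with h'; exact h'.symm
    rwa [this] at hr0R
  have hcC : ∀ k, c k ∈ C := by
    intro k
    obtain ⟨c0, hc0C, hc0⟩ := (hf k).2.2
    rw [List.getLast?_eq_getLast (hne k)] at hc0
    have : c0 = c k := by injection hc0 with h'; exact h'.symm
    rwa [this] at hc0C
  have hrinj : Function.Injective r := by
    intro k k' hkk'
    exact uniq k k' (r k) (hrmem k) (hkk' ▸ hrmem k')
  have hcinj : Function.Injective c := by
    intro k k' hkk'
    exact uniq k k' (c k) (hcmem k) (hkk' ▸ hcmem k')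
  -- the "next vertex" function
  set nxt : List V → V → V := fun l v => (l[(l.idxOf v + 1)]?).getD v with hnxt
  have hnxt_spec : ∀ (l : List V) (hl : l ≠ []) (v : V), l.Nodup → v ∈ l → v ≠ l.getLast hl →
      ∃ hi : l.idxOf v + 1 < l.length, nxt l v = l[l.idxOf v + 1] := by
    intro l hl v hnodup hv hvlast
    have hi : l.idxOf v < l.length := List.idxOf_lt_length_iff.2 hv
    have hi1 : l.idxOf v + 1 < l.length := by
      rcases Nat.lt_or_ge (l.idxOf v + 1) l.length with h' | h'
      · exact h'
      · exfalso
        have heq : l.idxOf v = l.length - 1 := by omega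
        apply hvlast
        rw [List.getLast_eq_getElem]
        exact (List.getElem_idxOf hi).symm.trans (by simp only [heq])
    refine ⟨hi1, ?_⟩
    rw [hnxt]
    simp only [List.getElem?_eq_getElem hi1, Option.getD_some]
  -- the step function
  set gs : V → V := fun v => if h : ∃ k, v ∈ f k then
      (if v = (f h.choose).getLast (hne _) then v else nxt (f h.choose) v) else v with hgs
  have hgs_spec : ∀ (k : Fin n) (v : V), v ∈ f k →
      gs v = if v = (f k).getLast (hne k) then v else nxt (f k) v := by
    intro k v hv
    have hex : ∃ k', v ∈ f k' := ⟨k, hv⟩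
    have hk : hex.choose = k := uniq _ _ v hex.choose_spec hv
    rw [hgs]
    simp only [dif_pos hex]
    simp only [hk]
  have hgs_off : ∀ v : V, (¬∃ k, v ∈ f k) → gs v = v := by
    intro v hv
    rw [hgs]
    simp only [dif_neg hv]
  -- non-last vertices on paths
  have hnotlast : ∀ (k : Fin n) (v : V), v ∈ f k → v ∉ Set.range c → v ≠ (f k).getLast (hne k) := by
    intro k v hv hvc hlast
    exact hvc ⟨k, hlast.symm⟩
  have hgs_path : ∀ (k : Fin n) (v : V), v ∈ f k → v ∉ Set.range c →
      ∃ hi : (f k).idxOf v + 1 < (f k).length, gs v = (f k)[(f k).idxOf v + 1] := by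
    intro k v hv hvc
    obtain ⟨hi, hnx⟩ := hnxt_spec (f k) (hne k) v (hnd k) hv (hnotlast k v hv hvc)
    refine ⟨hi, ?_⟩
    rw [hgs_spec k v hv, if_neg (hnotlast k v hv hvc), hnx]
  -- P1 : gs maps out of range r
  have P1 : ∀ v, v ∉ Set.range c → gs v ∉ Set.range r := by
    intro v hvc ⟨k', hk'⟩
    by_cases hv : ∃ k, v ∈ f k
    · obtain ⟨k, hvk⟩ := hv
      obtain ⟨hi, hnx⟩ := hgs_path k v hvk hvc
      have hmem : gs v ∈ f k := by rw [hnx]; exact List.getElem_mem _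
      have hkk : k' = k := uniq k' k (gs v) (hk' ▸ hrmem k') hmem
      subst hkk
      -- gs v = head (f k') = (f k')[0]
      have hhead : r k' = (f k')[0]'(List.length_pos_iff.2 (hne k')) := by
        rw [hrdef]
        exact List.head_eq_getElem_zero (hne k')
      rw [← hk', hhead] at hnx
      have := (List.Nodup.getElem_inj_iff (hnd k')).1 hnx.symm
      omega
    · rw [hgs_off v hv] at hk'
      exact hv ⟨k', hk' ▸ hrmem k'⟩
  -- P2 : routing property
  have P2 : ∀ v, v ∉ Set.range c → gs v = v ∨ (v, gs v) ∈ E := by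
    intro v hvc
    by_cases hv : ∃ k, v ∈ f k
    · obtain ⟨k, hvk⟩ := hv
      obtain ⟨hi, hnx⟩ := hgs_path k v hvk hvc
      right
      have hchain := (hf k).1.2.2
      unfold List.Chain' at hchain
      rw [List.isChain_iff_getElem] at hchain
      have hiv : (f k).idxOf v < (f k).length := List.idxOf_lt_length_iff.2 hvk
      have := hchain ((f k).idxOf v) (by omega)
      rw [hnx]
      have hvget : (f k)[(f k).idxOf v] = v := List.getElem_idxOf hiv
      rw [hvget] at this
      simpa [List.get_eq_getElem] using this
    · left; exact hgs_off v hv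
  -- P3 : injectivity off the endpoints
  have P3 : ∀ v v', v ∉ Set.range c → v' ∉ Set.range c → gs v = gs v' → v = v' := by
    intro v v' hvc hv'c heq
    by_cases hv : ∃ k, v ∈ f k
    · obtain ⟨k, hvk⟩ := hv
      obtain ⟨hi, hnx⟩ := hgs_path k v hvk hvc
      by_cases hv' : ∃ k', v' ∈ f k'
      · obtain ⟨k', hvk'⟩ := hv'
        obtain ⟨hi', hnx'⟩ := hgs_path k' v' hvk' hv'c
        have hmem : gs v ∈ f k := by rw [hnx]; exact List.getElem_mem _
        have hmem' : gs v' ∈ f k' := by rw [hnx']; exact List.getElem_mem _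
        have hkk : k = k' := uniq k k' (gs v) hmem (heq ▸ hmem')
        subst hkk
        rw [hnx, hnx'] at heq
        have := (List.Nodup.getElem_inj_iff (hnd k)).1 heq
        have hidx : (f k).idxOf v = (f k).idxOf v' := by omega
        have h1 : (f k).get ⟨(f k).idxOf v, List.idxOf_lt_length_iff.2 hvk⟩ = v :=
          List.idxOf_get _
        have h2 : (f k).get ⟨(f k).idxOf v', List.idxOf_lt_length_iff.2 hvk'⟩ = v' :=
          List.idxOf_get _
        rw [← h1, ← h2]
        congr 1
        exact Fin.ext hidx
      · exfalso
        rw [hgs_off v' hv'] at heq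
        have hmem : gs v ∈ f k := by rw [hnx]; exact List.getElem_mem _
        exact hv' ⟨k, heq ▸ hmem⟩
    · rw [hgs_off v hv] at heq
      by_cases hv' : ∃ k', v' ∈ f k'
      · exfalso
        obtain ⟨k', hvk'⟩ := hv'
        obtain ⟨hi', hnx'⟩ := hgs_path k' v' hvk' hv'c
        have hmem' : gs v' ∈ f k' := by rw [hnx']; exact List.getElem_mem _
        exact hv ⟨k', heq ▸ hmem'⟩
      · rw [hgs_off v' hv'] at heq
        exact heq
  refine ⟨r, c, hrinj, hcinj, hrR, hcC, ?_⟩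
  intro m u w hu hw hruc hwcc
  have hwnc : ∀ i, w i ∉ Set.range c := by
    intro i
    have : w i ∈ Set.range w := ⟨i, rfl⟩
    rwa [hwcc] at this
  have hφ : ∀ i : Fin m, ∃ j : Fin m, u j = gs (w i) := by
    intro i
    have h1 : gs (w i) ∉ Set.range r := P1 _ (hwnc i)
    have : gs (w i) ∈ Set.range u := by rw [hruc]; exact h1
    exact this
  choose φ hφspec using hφ
  have hφinj : Function.Injective φ := by
    intro i i' hii'
    have : gs (w i) = gs (w i') := by rw [← hφspec i, ← hφspec i', hii']
    exact hw (P3 _ _ (hwnc i) (hwnc i') this)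
  have hφbij : Function.Bijective φ := (Finite.injective_iff_bijective).1 hφinj
  refine ⟨Equiv.ofBijective φ hφbij, ?_⟩
  intro i
  have : u (Equiv.ofBijective φ hφbij i) = gs (w i) := hφspec i
  rw [this]
  exact P2 _ (hwnc i)

end Graph

section Rank

variable {F : Type*} [Field F] {α β : Type*} [Fintype α] [Fintype β]
  [DecidableEq α] [DecidableEq β]

lemma aux_rank_cols_le {k : ℕ} (M : Matrix α β F) (g : Fin k → β) :
    (M.submatrix id g).rank ≤ M.rank := by
  rw [rank_eq_finrank_span_cols, rank_eq_finrank_span_cols]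
  apply Submodule.finrank_mono
  apply Submodule.span_mono
  rintro x ⟨j, rfl⟩
  exact ⟨g j, rfl⟩

lemma aux_rank_sub_le {k l : ℕ} (M : Matrix α β F) (f : Fin k → α) (g : Fin l → β) :
    (M.submatrix f g).rank ≤ M.rank := by
  have h1 : (M.submatrix f g) = ((M.submatrix f id).submatrix id g) := rfl
  have h2 : (M.submatrix f g).rank ≤ (M.submatrix f id).rank := by
    rw [h1]; exact aux_rank_cols_le _ g
  refine h2.trans ?_
  have h3 : (M.submatrix f id)ᵀ = Mᵀ.submatrix id f := rfl
  calc (M.submatrix f id).rank = ((M.submatrix f id)ᵀ).rank := (rank_transpose _).symm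
    _ = (Mᵀ.submatrix id f).rank := by rw [h3]
    _ ≤ Mᵀ.rank := aux_rank_cols_le _ f
    _ = M.rank := rank_transpose M

theorem aux_rank_ge {M : Matrix α β F} {k : ℕ} (f : Fin k → α) (g : Fin k → β)
    (hf : Function.Injective f) (hg : Function.Injective g)
    (h : (M.submatrix f g).det ≠ 0) : k ≤ M.rank := by
  have hunit : IsUnit (M.submatrix f g) := by
    rw [Matrix.isUnit_iff_isUnit_det]
    exact isUnit_iff_ne_zero.2 h
  have := Matrix.rank_of_isUnit _ hunit
  rw [Fintype.card_fin] at this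
  calc k = (M.submatrix f g).rank := this.symm
    _ ≤ M.rank := aux_rank_sub_le M f g

lemma aux_cols_indep {M : Matrix α β F} {k : ℕ} (hk : k ≤ M.rank) :
    ∃ g : Fin k → β, Function.Injective g ∧ LinearIndependent F (fun j => Mᵀ (g j)) := by
  classical
  obtain ⟨s, hsub, hspan, hind⟩ := exists_linearIndependent F (Set.range Mᵀ)
  have hfin : s.Finite := (Set.finite_range Mᵀ).subset hsub
  haveI := hfin.fintype
  have h1 : Module.finrank F (Submodule.span F s) = s.toFinset.card :=
    finrank_span_set_eq_card hind
  have hcard : k ≤ s.toFinset.card := by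
    rw [rank_eq_finrank_span_cols, show Set.range M.col = Set.range Mᵀ from rfl, ← hspan, h1] at hk
    exact hk
  have hle : Fintype.card (Fin k) ≤ Fintype.card ↥s := by
    rw [Fintype.card_fin, ← Set.toFinset_card]
    exact hcard
  obtain ⟨e⟩ := Function.Embedding.nonempty_iff_card_le.mpr hle
  have hex : ∀ j : Fin k, ∃ b : β, Mᵀ b = (e j : α → F) := fun j => hsub (e j).2
  choose g hgspec using hex
  refine ⟨g, ?_, ?_⟩
  · intro a b hab
    apply e.injective
    apply Subtype.ext
    rw [← hgspec a, ← hgspec b, hab]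
  · have : (fun j => Mᵀ (g j)) = (fun j => ((e j : s) : α → F)) := by
      funext j; rw [hgspec j]
    rw [this]
    exact hind.comp (fun j => e j) e.injective

theorem aux_exists_minor {M : Matrix α β F} {k : ℕ} (hk : k ≤ M.rank) :
    ∃ (f : Fin k → α) (g : Fin k → β), Function.Injective f ∧ Function.Injective g ∧
      (M.submatrix f g).det ≠ 0 := by
  classical
  obtain ⟨g, hg, hgind⟩ := aux_cols_indep hk
  set N := M.submatrix id g with hN
  have hrN : N.rank = k := by
    rw [rank_eq_finrank_span_cols]
    have : N.col = fun j => Mᵀ (g j) := rfl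
    rw [this, finrank_span_eq_card hgind, Fintype.card_fin]
  have hrNT : k ≤ Nᵀ.rank := by rw [rank_transpose, hrN]
  obtain ⟨f, hf, hfind⟩ := aux_cols_indep hrNT
  have hrows : LinearIndependent F (fun i => N (f i)) := by
    have : (fun i => Nᵀᵀ (f i)) = (fun i => N (f i)) := rfl
    rwa [this] at hfind
  refine ⟨f, g, hf, hg, ?_⟩
  intro hdet
  obtain ⟨v, hv, hvz⟩ := (Matrix.exists_vecMul_eq_zero_iff).2 hdet
  have hsum : ∑ i, v i • (N (f i)) = 0 := by
    funext j
    have := congrFun hvz j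
    simpa [Matrix.vecMul, dotProduct, Finset.sum_apply, hN] using this
  have := Fintype.linearIndependent_iff.mp hrows v hsum
  apply hv
  funext i
  exact this i

end Rank

end Aux

/-- The rank of the generic submatrix `𝕋_{C,R}` equals `b(R→C)`, the maximum number of
pairwise vertex-disjoint directed paths from `R` to `C`. -/
theorem stmt_12 {V : Type*} [Fintype V] [DecidableEq V]
    (E : Finset (V × V)) (hloop : ∀ i : V, (i, i) ∉ E)
    (R C : Finset V) :
    (Matrix.of fun (c : {c : V // c ∈ C}) (r : {r : V // r ∈ R}) =>
      genT E c.1 r.1).rank = maxDisjointPaths E R C := by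
  classical
  set M := Matrix.of (fun (c : {c : V // c ∈ C}) (r : {r : V // r ∈ R}) =>
    genT E c.1 r.1) with hM
  have key₁ : ∀ n : ℕ, HasDisjointPaths E R C n → n ≤ M.rank := by
    intro n h
    obtain ⟨r, c, hrinj, hcinj, hrR, hcC, hrouting⟩ := aux_routing_of_paths E R C h
    obtain ⟨u, w, hu, hw, hru, hwc, hiff⟩ := aux_glue E hloop r c hrinj hcinj
    obtain ⟨τ, hτ⟩ := hrouting _ u w hu hw hru hwc
    have hdet2 : ((1 - genG E).submatrix u w).det ≠ 0 :=
      (aux_det_ne_zero_iff E hloop u w hu hw).2 ⟨τ, hτ⟩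
    have hdet1 : (Matrix.of fun k l : Fin n => genT E (c k) (r l)).det ≠ 0 := hiff.2 hdet2
    set c' : Fin n → {c : V // c ∈ C} := fun k => ⟨c k, hcC k⟩ with hc'
    set r' : Fin n → {r : V // r ∈ R} := fun k => ⟨r k, hrR k⟩ with hr'
    have hc'inj : Function.Injective c' := fun a b hab => hcinj (congrArg Subtype.val hab)
    have hr'inj : Function.Injective r' := fun a b hab => hrinj (congrArg Subtype.val hab)
    have hsub : M.submatrix c' r' = Matrix.of fun k l : Fin n => genT E (c k) (r l) := rfl
    exact aux_rank_ge c' r' hc'inj hr'inj (by rw [hsub]; exact hdet1)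
  have key₂ : ∀ n : ℕ, n ≤ M.rank → HasDisjointPaths E R C n := by
    intro n hk
    obtain ⟨f, g, hf, hg, hdet⟩ := aux_exists_minor (M := M) hk
    set c : Fin n → V := fun k => (f k).1 with hc
    set r : Fin n → V := fun k => (g k).1 with hr
    have hcinj : Function.Injective c := fun a b hab => hf (Subtype.ext hab)
    have hrinj : Function.Injective r := fun a b hab => hg (Subtype.ext hab)
    obtain ⟨u, w, hu, hw, hru, hwc, hiff⟩ := aux_glue E hloop r c hrinj hcinj
    have hsub : M.submatrix f g = Matrix.of fun k l : Fin n => genT E (c k) (r l) := rfl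
    have hdet1 : (Matrix.of fun k l : Fin n => genT E (c k) (r l)).det ≠ 0 := by
      rw [← hsub]; exact hdet
    have hdet2 := hiff.1 hdet1
    obtain ⟨τ, hτ⟩ := (aux_det_ne_zero_iff E hloop u w hu hw).1 hdet2
    exact aux_paths_of_routing E R C r c hrinj (fun k => (g k).2) (fun k => (f k).2)
      u w hu hw hru hwc τ hτ
  have h0 : HasDisjointPaths E R C 0 :=
    ⟨Fin.elim0, fun k => k.elim0, fun k => k.elim0⟩
  have hbdd : BddAbove {n : ℕ | HasDisjointPaths E R C n} :=
    ⟨M.rank, fun n hn => key₁ n hn⟩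
  have hnonempty : {n : ℕ | HasDisjointPaths E R C n}.Nonempty := ⟨0, h0⟩
  have hsup_mem : maxDisjointPaths E R C ∈ {n : ℕ | HasDisjointPaths E R C n} :=
    Nat.sSup_mem hnonempty hbdd
  apply le_antisymm
  · exact le_csSup hbdd (key₂ M.rank le_rfl)
  · exact key₁ _ hsup_mem
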